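/- For every density operator ρ in the spin-s representation there exists a (classical) probability measure μ on ℝ³ supported on the sphere of radius √(s(s+1)) centered at the origin, whose first and second moments agree with those of the angular momentum in ρ: ∫ x_j dμ(x) = tr(ρL_j) and ∫ x_j x_k dμ(x) = Re tr(ρL_jL_k) for all j,k ∈ {1,2,3}. -/

import Mathlib

open Matrix Complex
open scoped ComplexOrder

set_option maxRecDepth 4000
set_option maxHeartbeats 1000000
noncomputable section

/-- spin value s = j/2 -/
def sVal (j : ℕ) : ℝ := (j : ℝ) / 2

/-- m-value of the k-th basis vector: m = k - s -/
def mVal (j : ℕ) (k : Fin (j + 1)) : ℝ := (k : ℝ) - sVal j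

/-- L₃ -/
def L3 (j : ℕ) : Matrix (Fin (j + 1)) (Fin (j + 1)) ℂ :=
  Matrix.diagonal (fun k => (mVal j k : ℂ))

/-- raising operator L₊ -/
def Lp (j : ℕ) : Matrix (Fin (j + 1)) (Fin (j + 1)) ℂ :=
  Matrix.of fun i k =>
    if (i : ℕ) = (k : ℕ) + 1 then
      ((Real.sqrt (sVal j * (sVal j + 1) - mVal j k * (mVal j k + 1)) : ℝ) : ℂ)
    else 0

/-- lowering operator L₋ -/
def Lm (j : ℕ) : Matrix (Fin (j + 1)) (Fin (j + 1)) ℂ :=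
  Matrix.of fun i k =>
    if (i : ℕ) + 1 = (k : ℕ) then
      ((Real.sqrt (sVal j * (sVal j + 1) - mVal j k * (mVal j k - 1)) : ℝ) : ℂ)
    else 0

/-- L₁ = (L₊ + L₋)/2 -/
def L1 (j : ℕ) : Matrix (Fin (j + 1)) (Fin (j + 1)) ℂ := (1 / 2 : ℂ) • (Lp j + Lm j)

/-- L₂ = (L₊ − L₋)/(2i) -/
def L2 (j : ℕ) : Matrix (Fin (j + 1)) (Fin (j + 1)) ℂ :=
  (1 / (2 * Complex.I)) • (Lp j - Lm j)

-- radicand nonnegativity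
lemma radm_nonneg (j : ℕ) (k : Fin (j+1)) :
    0 ≤ sVal j * (sVal j + 1) - mVal j k * (mVal j k - 1) := by
  have hk : (k : ℝ) ≤ j := by exact_mod_cast Nat.le_of_lt_succ k.2
  have hk0 : (0:ℝ) ≤ (k : ℝ) := Nat.cast_nonneg _
  unfold mVal sVal
  nlinarith

lemma radp_nonneg (j : ℕ) (k : Fin (j+1)) :
    0 ≤ sVal j * (sVal j + 1) - mVal j k * (mVal j k + 1) := by
  have hk : (k : ℝ) ≤ j := by exact_mod_cast Nat.le_of_lt_succ k.2
  have hk0 : (0:ℝ) ≤ (k : ℝ) := Nat.cast_nonneg _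
  unfold mVal sVal
  nlinarith

lemma LpH (j : ℕ) : (Lp j)ᴴ = Lm j := by
  ext i k
  rw [conjTranspose_apply]
  show star ((Matrix.of _ : Matrix _ _ ℂ) k i) = (Matrix.of _ : Matrix _ _ ℂ) i k
  rw [Matrix.of_apply, Matrix.of_apply]
  by_cases h : (i : ℕ) + 1 = (k : ℕ)
  · have h' : (k : ℕ) = (i : ℕ) + 1 := h.symm
    rw [if_pos h, if_pos h', RCLike.star_def, Complex.conj_ofReal]
    have hk : (k : ℝ) = (i : ℝ) + 1 := by exact_mod_cast h.symm
    norm_cast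
    congr 1
    unfold mVal
    rw [hk]
    ring
  · have h' : ¬ ((k : ℕ) = (i : ℕ) + 1) := fun hh => h hh.symm
    rw [if_neg h, if_neg h', star_zero]

lemma LmH (j : ℕ) : (Lm j)ᴴ = Lp j := by
  rw [← LpH, conjTranspose_conjTranspose]

lemma L1H (j : ℕ) : (L1 j).IsHermitian := by
  unfold L1 Matrix.IsHermitian
  rw [conjTranspose_smul, conjTranspose_add, LpH, LmH]
  simp [add_comm]

lemma L2H (j : ℕ) : (L2 j).IsHermitian := by
  unfold L2 Matrix.IsHermitian
  rw [conjTranspose_smul, conjTranspose_sub, LpH, LmH]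
  have h : star (1 / (2 * Complex.I)) = -(1 / (2 * Complex.I)) := by
    rw [RCLike.star_def]
    have : (2 * Complex.I) ≠ 0 := by simp [Complex.I_ne_zero]
    field_simp
    simp [Complex.ext_iff]
  rw [h, neg_smul, ← smul_neg, neg_sub]

lemma L3H (j : ℕ) : (L3 j).IsHermitian := by
  unfold L3 Matrix.IsHermitian
  rw [diagonal_conjTranspose]
  have h : (star fun k : Fin (j+1) => ((mVal j k : ℝ) : ℂ)) = fun k : Fin (j+1) => ((mVal j k : ℝ) : ℂ) := by
    funext k
    exact Complex.conj_ofReal _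
  rw [h]

lemma LpLm (j : ℕ) : Lp j * Lm j =
    Matrix.diagonal (fun k => ((sVal j * (sVal j + 1) - mVal j k * (mVal j k - 1) : ℝ) : ℂ)) := by
  ext i k
  rw [mul_apply]
  have hterm : ∀ l : Fin (j+1), Lp j i l * Lm j l k =
      if ((i:ℕ) = (l:ℕ)+1 ∧ (l:ℕ)+1 = (k:ℕ)) then
        ((Real.sqrt (sVal j * (sVal j + 1) - mVal j l * (mVal j l + 1)) : ℝ) : ℂ) *
        ((Real.sqrt (sVal j * (sVal j + 1) - mVal j k * (mVal j k - 1)) : ℝ) : ℂ)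
      else 0 := by
    intro l
    simp only [Lp, Lm, of_apply, ite_zero_mul_ite_zero]
  simp only [hterm]
  by_cases hik : i = k
  · subst hik
    rw [diagonal_apply_eq]
    by_cases h0 : (i:ℕ) = 0
    · rw [Finset.sum_eq_zero (fun l _ => by
        rw [if_neg]; rintro ⟨h1, h2⟩; omega)]
      have hi : (i:ℝ) = 0 := by exact_mod_cast h0
      have : sVal j * (sVal j + 1) - mVal j i * (mVal j i - 1) = 0 := by
        unfold mVal sVal; rw [hi]; ring
      rw [this]; norm_num
    · have hle : (i:ℕ) - 1 < j + 1 := by omega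
      rw [Finset.sum_eq_single (⟨(i:ℕ)-1, hle⟩ : Fin (j+1))]
      · rw [if_pos (by constructor <;> simp <;> omega)]
        have hm : mVal j ⟨(i:ℕ)-1, hle⟩ = mVal j i - 1 := by
          unfold mVal
          have : ((⟨(i:ℕ)-1, hle⟩ : Fin (j+1)) : ℝ) = (i:ℝ) - 1 := by
            have h1 : (((i:ℕ) - 1 : ℕ) : ℝ) = (i:ℕ) - 1 := by
              push_cast [Nat.cast_sub (by omega : 1 ≤ (i:ℕ))]; ring
            simpa using h1
          rw [this]; ring
        rw [hm]
        rw [← Complex.ofReal_mul]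
        norm_cast
        have : sVal j * (sVal j + 1) - (mVal j i - 1) * (mVal j i - 1 + 1)
            = sVal j * (sVal j + 1) - mVal j i * (mVal j i - 1) := by ring
        rw [this, Real.mul_self_sqrt (radm_nonneg j i)]
      · intro l _ hl
        rw [if_neg]
        rintro ⟨h1, h2⟩
        apply hl
        apply Fin.ext
        simp
        omega
      · intro h
        exact absurd (Finset.mem_univ _) h
  · rw [diagonal_apply_ne _ hik]
    apply Finset.sum_eq_zero
    intro l _
    rw [if_neg]
    rintro ⟨h1, h2⟩
    exact hik (Fin.ext (by omega))

lemma LmLp (j : ℕ) : Lm j * Lp j =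
    Matrix.diagonal (fun k => ((sVal j * (sVal j + 1) - mVal j k * (mVal j k + 1) : ℝ) : ℂ)) := by
  ext i k
  rw [mul_apply]
  have hterm : ∀ l : Fin (j+1), Lm j i l * Lp j l k =
      if ((i:ℕ)+1 = (l:ℕ) ∧ (l:ℕ) = (k:ℕ)+1) then
        ((Real.sqrt (sVal j * (sVal j + 1) - mVal j l * (mVal j l - 1)) : ℝ) : ℂ) *
        ((Real.sqrt (sVal j * (sVal j + 1) - mVal j k * (mVal j k + 1)) : ℝ) : ℂ)
      else 0 := by
    intro l
    simp only [Lm, Lp, of_apply, ite_zero_mul_ite_zero]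
  simp only [hterm]
  by_cases hik : i = k
  · subst hik
    rw [diagonal_apply_eq]
    by_cases h0 : (i:ℕ) = j
    · rw [Finset.sum_eq_zero (fun l _ => by
        rw [if_neg]; rintro ⟨h1, h2⟩; have := l.2; omega)]
      have hi : (i:ℝ) = j := by exact_mod_cast h0
      have : sVal j * (sVal j + 1) - mVal j i * (mVal j i + 1) = 0 := by
        unfold mVal sVal; rw [hi]; ring
      rw [this]; norm_num
    · have hle : (i:ℕ) + 1 < j + 1 := by have := i.2; omega
      rw [Finset.sum_eq_single (⟨(i:ℕ)+1, hle⟩ : Fin (j+1))]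
      · rw [if_pos (by constructor <;> simp)]
        have hm : mVal j ⟨(i:ℕ)+1, hle⟩ = mVal j i + 1 := by
          unfold mVal
          have : ((⟨(i:ℕ)+1, hle⟩ : Fin (j+1)) : ℝ) = (i:ℝ) + 1 := by push_cast; simp
          rw [this]; ring
        rw [hm]
        rw [← Complex.ofReal_mul]
        norm_cast
        have : sVal j * (sVal j + 1) - (mVal j i + 1) * (mVal j i + 1 - 1)
            = sVal j * (sVal j + 1) - mVal j i * (mVal j i + 1) := by ring
        rw [this, Real.mul_self_sqrt (radp_nonneg j i)]
      · intro l _ hl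
        rw [if_neg]
        rintro ⟨h1, h2⟩
        apply hl
        apply Fin.ext
        simp
        omega
      · intro h
        exact absurd (Finset.mem_univ _) h
  · rw [diagonal_apply_ne _ hik]
    apply Finset.sum_eq_zero
    intro l _
    rw [if_neg]
    rintro ⟨h1, h2⟩
    exact hik (Fin.ext (by omega))

lemma casimir (j : ℕ) : L1 j * L1 j + L2 j * L2 j + L3 j * L3 j
    = ((sVal j * (sVal j + 1) : ℝ) : ℂ) • (1 : Matrix (Fin (j+1)) (Fin (j+1)) ℂ) := by
  have h12 : L1 j * L1 j + L2 j * L2 j = (1/2 : ℂ) • (Lp j * Lm j + Lm j * Lp j) := by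
    unfold L1 L2
    rw [smul_mul_assoc, mul_smul_comm, smul_smul, smul_mul_assoc, mul_smul_comm, smul_smul]
    have c1 : (1/2 : ℂ) * (1/2) = 1/4 := by norm_num
    have c2 : (1/(2*Complex.I) : ℂ) * (1/(2*Complex.I)) = -(1/4) := by
      have : (2 * Complex.I) ≠ 0 := by simp [Complex.I_ne_zero]
      field_simp
      linear_combination (4:ℂ) * Complex.I_sq
    rw [c1, c2]
    rw [add_mul, mul_add, mul_add, sub_mul, mul_sub, mul_sub]
    module
  rw [h12, LpLm, LmLp]
  have h3 : L3 j * L3 j = Matrix.diagonal (fun k => ((mVal j k * mVal j k : ℝ) : ℂ)) := by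
    unfold L3
    rw [diagonal_mul_diagonal]
    congr 1
    funext k
    push_cast
    ring
  rw [h3]
  ext i k
  by_cases h : i = k
  · subst h
    simp only [Matrix.add_apply, Matrix.smul_apply, diagonal_apply_eq, Matrix.one_apply_eq,
      smul_eq_mul, Pi.add_apply]
    push_cast
    ring
  · simp only [Matrix.add_apply, Matrix.smul_apply, diagonal_apply_ne _ h,
      Matrix.one_apply_ne h, smul_eq_mul, Pi.add_apply]
    simp

lemma trace_psd_nonneg {n : Type*} [Fintype n] [DecidableEq n] {M : Matrix n n ℂ}
    (hM : M.PosSemidef) : 0 ≤ M.trace := by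
  rw [Matrix.trace]
  apply Finset.sum_nonneg
  intro i _
  have h := hM.dotProduct_mulVec_nonneg (Pi.single i 1)
  have he : star (Pi.single i 1 : n → ℂ) ⬝ᵥ M *ᵥ (Pi.single i 1) = M i i := by
    simp [Matrix.mulVec_single, dotProduct, Pi.single_apply, apply_ite]
  rwa [he] at h

-- trace of ρ * A is real when both Hermitian
lemma trace_mul_real {n : Type*} [Fintype n] {ρ A : Matrix n n ℂ}
    (hρ : ρ.IsHermitian) (hA : A.IsHermitian) :
    ((ρ * A).trace : ℂ) = (((ρ * A).trace).re : ℝ) := by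
  have h : star ((ρ * A).trace) = (ρ * A).trace := by
    rw [← Matrix.trace_conjTranspose, conjTranspose_mul, hρ.eq, hA.eq, Matrix.trace_mul_comm]
  exact (Complex.conj_eq_iff_re.mp h).symm

lemma re_trace_sym {n : Type*} [Fintype n] {ρ A B : Matrix n n ℂ}
    (hρ : ρ.IsHermitian) (hA : A.IsHermitian) (hB : B.IsHermitian) :
    ((ρ * (A * B)).trace).re = ((ρ * (B * A)).trace).re := by
  have h : star ((ρ * (A * B)).trace) = (ρ * (B * A)).trace := by
    rw [← Matrix.trace_conjTranspose, conjTranspose_mul, conjTranspose_mul, hρ.eq, hA.eq, hB.eq,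
      Matrix.trace_mul_comm]
  calc ((ρ * (A * B)).trace).re = (star ((ρ * (A * B)).trace)).re := (Complex.conj_re _).symm
    _ = ((ρ * (B * A)).trace).re := by rw [h]

lemma var_nonneg' {n : Type*} [Fintype n] [DecidableEq n] {ρ A : Matrix n n ℂ}
    (hρ : ρ.PosSemidef) (htr : ρ.trace = 1) (hA : A.IsHermitian) :
    (((ρ * A).trace).re) ^ 2 ≤ ((ρ * (A * A)).trace).re := by
  set c : ℝ := ((ρ * A).trace).re with hc
  have hAc : (ρ * A).trace = (c : ℂ) := trace_mul_real hρ.1 hA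
  set B : Matrix n n ℂ := A - (c : ℂ) • 1 with hB
  have hBH : B.IsHermitian := by
    apply Matrix.IsHermitian.sub hA
    rw [Matrix.IsHermitian, conjTranspose_smul, conjTranspose_one, RCLike.star_def,
      Complex.conj_ofReal]
  have hpsd : (Bᴴ * ρ * B).PosSemidef := hρ.conjTranspose_mul_mul_same B
  rw [hBH.eq] at hpsd
  have htrace : (B * ρ * B).trace = (ρ * (A * A)).trace - (c : ℂ) ^ 2 := by
    rw [Matrix.trace_mul_comm (B * ρ) B, ← Matrix.mul_assoc, Matrix.trace_mul_comm (B*B) ρ]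
    have hBB : B * B = A * A - (2 * c : ℂ) • A + ((c:ℂ)^2) • 1 := by
      rw [hB, sub_mul, mul_sub, mul_sub]
      simp only [Matrix.mul_one, Matrix.one_mul, smul_mul_assoc, mul_smul_comm, smul_smul,
        ← pow_two]
      rw [two_mul, add_smul]
      abel_nf
      rw [smul_pow, one_pow]
    rw [hBB]
    rw [Matrix.mul_add, Matrix.mul_sub, Matrix.trace_add, Matrix.trace_sub,
      mul_smul_comm, mul_smul_comm, Matrix.trace_smul, Matrix.trace_smul, Matrix.mul_one, htr,
      hAc]
    simp only [smul_eq_mul]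
    push_cast
    ring
  have h0 : 0 ≤ (B * ρ * B).trace := trace_psd_nonneg hpsd
  rw [htrace] at h0
  have := (Complex.le_def.mp h0).1
  rw [Complex.zero_re, Complex.sub_re, ← Complex.ofReal_pow, Complex.ofReal_re] at this
  linarith


/-- density operator -/
def IsDensity {j : ℕ} (ρ : Matrix (Fin (j + 1)) (Fin (j + 1)) ℂ) : Prop :=
  ρ.PosSemidef ∧ ρ.trace = 1

/-- expectation value -/
def expVal {j : ℕ} (ρ A : Matrix (Fin (j + 1)) (Fin (j + 1)) ℂ) : ℝ :=
  ((ρ * A).trace).re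

/-- variance -/
def Var {j : ℕ} (ρ A : Matrix (Fin (j + 1)) (Fin (j + 1)) ℂ) : ℝ :=
  ((ρ * A ^ 2).trace).re - (((ρ * A).trace).re) ^ 2

/-- angular momentum component along a direction e ∈ ℝ³ -/
def dirL (j : ℕ) (e : Fin 3 → ℝ) : Matrix (Fin (j + 1)) (Fin (j + 1)) ℂ :=
  (e 0 : ℂ) • L1 j + (e 1 : ℂ) • L2 j + (e 2 : ℂ) • L3 j

open MeasureTheory

/-- the three angular momentum components as a function `Fin 3 → Matrix` -/
def Lcomp (j : ℕ) : Fin 3 → Matrix (Fin (j + 1)) (Fin (j + 1)) ℂ := ![L1 j, L2 j, L3 j]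

lemma integrable_wdirac {f : EuclideanSpace ℝ (Fin 3) → ℝ} (hf : Continuous f)
    (c : ℝ) (p : EuclideanSpace ℝ (Fin 3)) :
    Integrable f (ENNReal.ofReal c • Measure.dirac p) := by
  apply Integrable.smul_measure _ ENNReal.ofReal_ne_top
  constructor
  · exact hf.aestronglyMeasurable
  · rw [HasFiniteIntegral, lintegral_dirac]
    exact ENNReal.coe_lt_top

lemma integral_wdirac (f : EuclideanSpace ℝ (Fin 3) → ℝ)
    (c : ℝ) (hc : 0 ≤ c) (p : EuclideanSpace ℝ (Fin 3)) :
    ∫ x, f x ∂(ENNReal.ofReal c • Measure.dirac p) = c * f p := by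
  rw [integral_smul_measure, integral_dirac, ENNReal.toReal_ofReal hc, smul_eq_mul]

lemma continuous_coord (a : Fin 3) : Continuous (fun x : EuclideanSpace ℝ (Fin 3) => x a) :=
  (continuous_apply a).comp (PiLp.continuous_ofLp 2 (fun _ : Fin 3 => ℝ))

lemma euclid_norm_eq (x : EuclideanSpace ℝ (Fin 3)) (R : ℝ) (hR : 0 ≤ R)
    (h : ∑ a, (x a) ^ 2 = R ^ 2) : ‖x‖ = R := by
  rw [EuclideanSpace.norm_eq]
  have : ∑ a, ‖x a‖ ^ 2 = R ^ 2 := by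
    rw [← h]
    exact Finset.sum_congr rfl fun a _ => by rw [Real.norm_eq_abs, _root_.sq_abs]
  rw [this, Real.sqrt_sq hR]

lemma mem_sphere_of_norm (x : EuclideanSpace ℝ (Fin 3)) (R : ℝ) (h : ‖x‖ = R) :
    x ∈ Metric.sphere (0 : EuclideanSpace ℝ (Fin 3)) R := by
  simpa [mem_sphere_iff_norm] using h

lemma exists_sphere_measure (R : ℝ) (hR : 0 ≤ R) (v : Fin 3 → ℝ)
    (N : Matrix (Fin 3) (Fin 3) ℝ)
    (hpsd : (N - Matrix.of (fun a b => v a * v b)).PosSemidef)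
    (htr : N.trace = R ^ 2) :
    ∃ μ : Measure (EuclideanSpace ℝ (Fin 3)), IsProbabilityMeasure μ ∧
      μ (Metric.sphere (0 : EuclideanSpace ℝ (Fin 3)) R)ᶜ = 0 ∧
      (∀ a, ∫ x, x a ∂μ = v a) ∧
      (∀ a b, ∫ x, x a * x b ∂μ = N a b) := by
  classical
  obtain ⟨B, hB⟩ : ∃ B : Matrix (Fin 3) (Fin 3) ℝ, N - Matrix.of (fun a b => v a * v b) = Bᴴ * B := by
    open scoped MatrixOrder in exact CStarAlgebra.nonneg_iff_eq_star_mul_self.mp hpsd.nonneg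
  have hN : ∀ a b, N a b = v a * v b + ∑ i, B i a * B i b := by
    intro a b
    have h1 : (N - Matrix.of (fun a b => v a * v b)) a b = ∑ i, B i a * B i b := by
      rw [hB, Matrix.mul_apply]
      exact Finset.sum_congr rfl fun i _ => by
        simp [Matrix.conjTranspose_apply]
    simp only [Matrix.sub_apply, Matrix.of_apply] at h1
    linarith
  set D : ℝ := R ^ 2 - ∑ a, v a ^ 2 with hD
  have hDsum : D = ∑ i, ∑ a, (B i a) ^ 2 := by
    have htr' : ∑ a, N a a = R ^ 2 := htr
    rw [hD, ← htr']
    rw [Finset.sum_congr rfl (fun a _ => hN a a)]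
    rw [Finset.sum_add_distrib, Finset.sum_comm]
    simp only [← sq]
    ring
  have hD0 : 0 ≤ D := by
    rw [hDsum]
    exact Finset.sum_nonneg fun i _ => Finset.sum_nonneg fun a _ => sq_nonneg _
  rcases eq_or_lt_of_le hD0 with hDeq | hDpos
  · -- degenerate case : D = 0, point measure at v
    have h0 : ∑ i, ∑ a, (B i a) ^ 2 = 0 := by rw [← hDsum]; exact hDeq.symm
    have hBzero : ∀ i a, B i a = 0 := by
      intro i a
      have h2 := (Finset.sum_eq_zero_iff_of_nonneg
        (fun i (_ : i ∈ Finset.univ) =>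
          Finset.sum_nonneg fun a _ => sq_nonneg (B i a))).mp h0 i (Finset.mem_univ i)
      have h3 := (Finset.sum_eq_zero_iff_of_nonneg
        (fun a (_ : a ∈ Finset.univ) => sq_nonneg (B i a))).mp h2 a (Finset.mem_univ a)
      exact pow_eq_zero_iff two_ne_zero |>.mp h3
    have hNv : ∀ a b, N a b = v a * v b := by
      intro a b
      rw [hN a b]
      simp [hBzero]
    have hvnorm : ∑ a, v a ^ 2 = R ^ 2 := by
      have : D = 0 := hDeq.symm
      rw [hD] at this
      linarith
    set pv : EuclideanSpace ℝ (Fin 3) := (WithLp.equiv 2 (Fin 3 → ℝ)).symm v with hpv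
    have hpva : ∀ a, pv a = v a := fun a => rfl
    have hmem : pv ∈ Metric.sphere (0 : EuclideanSpace ℝ (Fin 3)) R :=
      mem_sphere_of_norm pv R (euclid_norm_eq pv R hR (by simp only [hpva]; exact hvnorm))
    refine ⟨Measure.dirac pv, inferInstance, ?_, ?_, ?_⟩
    · rw [Measure.dirac_apply]
      have hnm : pv ∉ (Metric.sphere (0 : EuclideanSpace ℝ (Fin 3)) R)ᶜ := by
        simp only [Set.mem_compl_iff, not_not]
        exact hmem
      rw [Set.indicator_of_notMem hnm]
    · intro a
      rw [integral_dirac]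
      exact hpva a
    · intro a b
      rw [integral_dirac, hNv a b, hpva a, hpva b]
  · -- main case : D > 0
    set c : Fin 3 → ℝ := fun i => ∑ a, (B i a)^2 with hc
    set A : Fin 3 → ℝ := fun i => ∑ a, v a * B i a with hA
    set r : Fin 3 → ℝ := fun i => Real.sqrt ((A i)^2 + c i * D) with hr
    set t : Fin 3 → Bool → ℝ := fun i σ =>
      if σ then (-(A i) + r i)/(c i) else (-(A i) - r i)/(c i) with ht
    set w : Fin 3 → Bool → ℝ := fun i σ =>
      if σ then c i * (A i + r i) / (2 * D * r i) else c i * (r i - A i) / (2 * D * r i) with hw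
    set P : Fin 3 → Bool → EuclideanSpace ℝ (Fin 3) := fun i σ =>
      (WithLp.equiv 2 (Fin 3 → ℝ)).symm (fun a => v a + t i σ * B i a) with hP
    have hPa : ∀ i σ a, P i σ a = v a + t i σ * B i a := fun i σ a => rfl
    have hc0 : ∀ i, 0 ≤ c i := fun i => Finset.sum_nonneg fun a _ => sq_nonneg _
    have hcsum : ∑ i, c i = D := hDsum.symm
    have hr2 : ∀ i, r i ^ 2 = A i ^ 2 + c i * D := by
      intro i
      rw [hr]
      exact Real.sq_sqrt (by nlinarith [sq_nonneg (A i), mul_nonneg (hc0 i) hD0])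
    have hrnn : ∀ i, 0 ≤ r i := fun i => Real.sqrt_nonneg _
    have hrabs : ∀ i, |A i| ≤ r i := by
      intro i
      rw [← Real.sqrt_sq_eq_abs, hr]
      exact Real.sqrt_le_sqrt (by nlinarith [mul_nonneg (hc0 i) hD0])
    have hrpos : ∀ i, c i ≠ 0 → 0 < r i := by
      intro i hci
      rw [hr]
      apply Real.sqrt_pos.mpr
      have hcpos : 0 < c i := lt_of_le_of_ne (hc0 i) (Ne.symm hci)
      nlinarith [sq_nonneg (A i)]
    have hczero : ∀ i, c i = 0 → ∀ a, B i a = 0 := by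
      intro i hci a
      have h : ∑ a, (B i a)^2 = 0 := by
        have h' := hci
        simp only [hc] at h'
        exact h'
      have := (Finset.sum_eq_zero_iff_of_nonneg
        (fun a (_ : a ∈ Finset.univ) => sq_nonneg (B i a))).mp h a (Finset.mem_univ a)
      exact pow_eq_zero_iff two_ne_zero |>.mp this
    have hwzero : ∀ i σ, c i = 0 → w i σ = 0 := by
      intro i σ hci
      rw [hw]
      cases σ <;> simp [hci]
    have hwnn : ∀ i σ, 0 ≤ w i σ := by
      intro i σ
      have h1 : A i + r i ≥ 0 := by have := hrabs i; have := abs_le.mp this; linarith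
      have h2 : r i - A i ≥ 0 := by have := abs_le.mp (hrabs i); linarith
      rw [hw]
      cases σ <;> simp only [if_true, if_false, Bool.false_eq_true]
      · apply div_nonneg (by nlinarith [hc0 i]) (by nlinarith [hrnn i])
      · apply div_nonneg (by nlinarith [hc0 i]) (by nlinarith [hrnn i])
    have keyW : ∀ i, w i true + w i false = c i / D := by
      intro i
      by_cases hci : c i = 0
      · rw [hwzero i true hci, hwzero i false hci, hci]
        simp
      · have hrp := hrpos i hci
        rw [hw]
        simp only [if_true, if_false, Bool.false_eq_true]
        field_simp
        ring
    have hWt : ∀ i, w i true * t i true + w i false * t i false = 0 := by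
      intro i
      by_cases hci : c i = 0
      · rw [hwzero i true hci, hwzero i false hci]; ring
      · have hrp := hrpos i hci
        rw [hw, ht]
        simp only [if_true, if_false, Bool.false_eq_true]
        field_simp
        ring
    have hWt2 : ∀ i, c i ≠ 0 →
        w i true * t i true ^ 2 + w i false * t i false ^ 2 = 1 := by
      intro i hci
      have hrp := hrpos i hci
      rw [hw, ht]
      simp only [if_true, if_false, Bool.false_eq_true]
      field_simp
      linear_combination (2 * r i) * hr2 i
    have keyA : ∀ i a, w i true * P i true a + w i false * P i false a = (c i / D) * v a := by
      intro i a
      rw [hPa, hPa]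
      linear_combination v a * keyW i + B i a * hWt i
    have keyB : ∀ i a b,
        w i true * (P i true a * P i true b) + w i false * (P i false a * P i false b)
        = (c i / D) * (v a * v b) + B i a * B i b := by
      intro i a b
      by_cases hci : c i = 0
      · rw [hwzero i true hci, hwzero i false hci, hczero i hci a, hci]
        ring
      · rw [hPa, hPa, hPa, hPa]
        linear_combination (v a * v b) * keyW i + (v a * B i b + v b * B i a) * hWt i
          + (B i a * B i b) * hWt2 i hci
    have hsum2 : ∀ i σ, ∑ a, (P i σ a)^2 = (R^2 - D) + 2 * t i σ * A i + (t i σ)^2 * c i := by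
      intro i σ
      simp only [hPa]
      have hterm : ∀ a, (v a + t i σ * B i a)^2
          = v a^2 + (2 * t i σ) * (v a * B i a) + (t i σ)^2 * (B i a)^2 := fun a => by ring
      rw [Finset.sum_congr rfl fun a _ => hterm a, Finset.sum_add_distrib,
        Finset.sum_add_distrib, ← Finset.mul_sum, ← Finset.mul_sum]
      have hv : ∑ a, v a ^ 2 = R^2 - D := by rw [hD]; ring
      have hAi : ∑ a, v a * B i a = A i := by rw [hA]
      have hci : ∑ a, (B i a)^2 = c i := by rw [hc]
      rw [hv, hAi, hci]
    have hsph : ∀ i σ, w i σ ≠ 0 →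
        P i σ ∈ Metric.sphere (0 : EuclideanSpace ℝ (Fin 3)) R := by
      intro i σ hwz
      have hci : c i ≠ 0 := fun h => hwz (hwzero i σ h)
      have hrp := hrpos i hci
      apply mem_sphere_of_norm
      apply euclid_norm_eq _ _ hR
      rw [hsum2 i σ]
      have hts : 2 * t i σ * A i + (t i σ)^2 * c i = D := by
        refine mul_left_cancel₀ hci ?_
        cases σ
        · have h1 : c i * t i false = -A i - r i := by
            rw [ht]
            simp only [Bool.false_eq_true, if_false]
            field_simp
          linear_combination (c i * t i false + A i - r i) * h1 + hr2 i
        · have h1 : c i * t i true = -A i + r i := by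
            rw [ht]
            simp only [if_true]
            field_simp
          linear_combination (c i * t i true + A i + r i) * h1 + hr2 i
      linarith [hts]
    set μ : Measure (EuclideanSpace ℝ (Fin 3)) :=
      ∑ z : Fin 3 × Bool, ENNReal.ofReal (w z.1 z.2) • Measure.dirac (P z.1 z.2) with hμ
    have hint : ∀ f : EuclideanSpace ℝ (Fin 3) → ℝ, Continuous f →
        ∫ x, f x ∂μ = ∑ i, (w i true * f (P i true) + w i false * f (P i false)) := by
      intro f hf
      rw [hμ, integral_finset_sum_measure (fun z _ => integrable_wdirac hf _ _)]
      rw [Fintype.sum_prod_type]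
      refine Finset.sum_congr rfl fun i _ => ?_
      rw [Fintype.sum_bool]
      rw [integral_wdirac f _ (hwnn i true) _, integral_wdirac f _ (hwnn i false) _]
    have hwsum : ∑ i, (c i / D) = 1 := by
      rw [← Finset.sum_div, hcsum, div_self hDpos.ne']
    refine ⟨μ, ?_, ?_, ?_, ?_⟩
    · constructor
      rw [hμ, Measure.finset_sum_apply]
      simp only [Measure.smul_apply, measure_univ, smul_eq_mul, mul_one]
      rw [Fintype.sum_prod_type]
      have hstep : ∀ i : Fin 3, ∑ σ : Bool, ENNReal.ofReal (w i σ) = ENNReal.ofReal (c i / D) := by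
        intro i
        rw [Fintype.sum_bool, ← ENNReal.ofReal_add (hwnn i true) (hwnn i false), keyW i]
      rw [Finset.sum_congr rfl fun i _ => hstep i,
        ← ENNReal.ofReal_sum_of_nonneg (fun i _ => by positivity), hwsum, ENNReal.ofReal_one]
    · rw [hμ, Measure.finset_sum_apply]
      refine Finset.sum_eq_zero fun z _ => ?_
      rw [Measure.smul_apply]
      by_cases hwz : w z.1 z.2 = 0
      · rw [hwz, ENNReal.ofReal_zero, zero_smul]
      · have hmem := hsph z.1 z.2 hwz
        rw [Measure.dirac_apply]
        have hnm : P z.1 z.2 ∉ (Metric.sphere (0 : EuclideanSpace ℝ (Fin 3)) R)ᶜ := by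
          simp only [Set.mem_compl_iff, not_not]
          exact hmem
        rw [Set.indicator_of_notMem hnm, smul_zero]
    · intro a
      rw [hint _ (continuous_coord a)]
      rw [Finset.sum_congr rfl fun i _ => keyA i a, ← Finset.sum_mul, hwsum, one_mul]
    · intro a b
      have hf : Continuous (fun x : EuclideanSpace ℝ (Fin 3) => x a * x b) :=
        (continuous_coord a).mul (continuous_coord b)
      rw [hint _ hf]
      rw [Finset.sum_congr rfl fun i _ => keyB i a b, Finset.sum_add_distrib,
        ← Finset.sum_mul, hwsum, one_mul, hN a b]

/-- the vector model — for every density operator there is a classical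
    probability measure on the sphere of radius √(s(s+1)) matching all first and
    second moments of the angular momentum. -/
theorem vector_model (j : ℕ) (hj : 0 < j)
    (ρ : Matrix (Fin (j + 1)) (Fin (j + 1)) ℂ) (hρ : IsDensity ρ) :
    ∃ μ : Measure (EuclideanSpace ℝ (Fin 3)), IsProbabilityMeasure μ ∧
      μ (Metric.sphere (0 : EuclideanSpace ℝ (Fin 3))
          (Real.sqrt (sVal j * (sVal j + 1))))ᶜ = 0 ∧
      (∀ a : Fin 3, ∫ x, x a ∂μ = expVal ρ (Lcomp j a)) ∧
      (∀ a b : Fin 3, ∫ x, x a * x b ∂μ =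
        ((ρ * (Lcomp j a * Lcomp j b)).trace).re) := by
  classical
  obtain ⟨hρpsd, hρtr⟩ := hρ
  have hLH : ∀ a : Fin 3, (Lcomp j a).IsHermitian := by
    intro a
    fin_cases a
    · exact L1H j
    · exact L2H j
    · exact L3H j
  set R : ℝ := Real.sqrt (sVal j * (sVal j + 1)) with hRdef
  have hsnn : 0 ≤ sVal j * (sVal j + 1) := by
    have : (0:ℝ) ≤ (j:ℝ) := Nat.cast_nonneg _
    unfold sVal
    nlinarith
  have hR : 0 ≤ R := Real.sqrt_nonneg _
  have hR2 : R ^ 2 = sVal j * (sVal j + 1) := Real.sq_sqrt hsnn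
  set v : Fin 3 → ℝ := fun a => ((ρ * Lcomp j a).trace).re with hv
  set N : Matrix (Fin 3) (Fin 3) ℝ :=
    Matrix.of (fun a b => ((ρ * (Lcomp j a * Lcomp j b)).trace).re) with hNdef
  -- trace condition
  have htrace : N.trace = R ^ 2 := by
    have hsum : ∑ a : Fin 3, Lcomp j a * Lcomp j a
        = ((sVal j * (sVal j + 1) : ℝ) : ℂ) • (1 : Matrix (Fin (j+1)) (Fin (j+1)) ℂ) := by
      rw [Fin.sum_univ_three]
      show L1 j * L1 j + L2 j * L2 j + L3 j * L3 j = _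
      exact casimir j
    have h1 : ∑ a : Fin 3, (ρ * (Lcomp j a * Lcomp j a)).trace
        = ((sVal j * (sVal j + 1) : ℝ) : ℂ) := by
      rw [← Matrix.trace_sum]
      rw [← Finset.sum_congr rfl fun a (_ : a ∈ Finset.univ) => rfl, ← Matrix.mul_sum, hsum]
      rw [mul_smul_comm, Matrix.trace_smul, Matrix.mul_one, hρtr, smul_eq_mul, mul_one]
    have h2 : N.trace = (∑ a : Fin 3, (ρ * (Lcomp j a * Lcomp j a)).trace).re := by
      rw [Matrix.trace, Complex.re_sum]
      rfl
    rw [h2, h1, Complex.ofReal_re, hR2]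
  -- quadratic form expansion
  have hexpand : ∀ x : Fin 3 → ℝ,
      ((ρ * ((∑ a : Fin 3, (x a : ℂ) • Lcomp j a) * (∑ b : Fin 3, (x b : ℂ) • Lcomp j b))).trace).re
      = ∑ a : Fin 3, ∑ b : Fin 3, x a * x b * N a b := by
    intro x
    rw [Finset.sum_mul_sum]
    have hterm : ∀ a b : Fin 3, ((x a : ℂ) • Lcomp j a) * ((x b : ℂ) • Lcomp j b)
        = ((x a * x b : ℝ) : ℂ) • (Lcomp j a * Lcomp j b) := by
      intro a b
      rw [smul_mul_assoc, mul_smul_comm, smul_smul, Complex.ofReal_mul]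
    simp only [hterm]
    rw [Matrix.mul_sum, Matrix.trace_sum, Complex.re_sum]
    refine Finset.sum_congr rfl fun a _ => ?_
    rw [Matrix.mul_sum, Matrix.trace_sum, Complex.re_sum]
    refine Finset.sum_congr rfl fun b _ => ?_
    rw [mul_smul_comm, Matrix.trace_smul, smul_eq_mul, Complex.re_ofReal_mul]
    rfl
  have hlin : ∀ x : Fin 3 → ℝ,
      ((ρ * (∑ a : Fin 3, (x a : ℂ) • Lcomp j a)).trace).re = ∑ a : Fin 3, x a * v a := by
    intro x
    rw [Matrix.mul_sum, Matrix.trace_sum, Complex.re_sum]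
    refine Finset.sum_congr rfl fun a _ => ?_
    rw [mul_smul_comm, Matrix.trace_smul, smul_eq_mul, Complex.re_ofReal_mul]
  have hAH : ∀ x : Fin 3 → ℝ, (∑ a : Fin 3, (x a : ℂ) • Lcomp j a).IsHermitian := by
    intro x
    rw [Matrix.IsHermitian, Matrix.conjTranspose_sum]
    refine Finset.sum_congr rfl fun a _ => ?_
    rw [Matrix.conjTranspose_smul, (hLH a).eq, RCLike.star_def, Complex.conj_ofReal]
  -- N symmetric
  have hNsym : ∀ a b : Fin 3, N a b = N b a := by
    intro a b
    exact re_trace_sym hρpsd.1 (hLH a) (hLH b)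
  have hpsd : (N - Matrix.of (fun a b => v a * v b)).PosSemidef := by
    refine Matrix.PosSemidef.of_dotProduct_mulVec_nonneg ?_ ?_
    · rw [Matrix.IsHermitian]
      ext a b
      simp only [Matrix.conjTranspose_apply, Matrix.sub_apply, Matrix.of_apply, star_trivial]
      rw [hNsym b a]
      ring
    · intro x
      rw [star_trivial]
      have hquad : x ⬝ᵥ (N - Matrix.of (fun a b => v a * v b)) *ᵥ x
          = (∑ a, ∑ b, x a * x b * N a b) - (∑ a, x a * v a)^2 := by
        simp only [dotProduct, Matrix.mulVec, dotProduct, Matrix.sub_apply, Matrix.of_apply]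
        rw [sq, Finset.sum_mul_sum, ← Finset.sum_sub_distrib]
        refine Finset.sum_congr rfl fun a _ => ?_
        rw [Finset.mul_sum, ← Finset.sum_sub_distrib]
        refine Finset.sum_congr rfl fun b _ => ?_
        ring
      rw [hquad]
      have hvar := var_nonneg' hρpsd hρtr (hAH x)
      rw [hexpand x, hlin x] at hvar
      linarith
  obtain ⟨μ, hμ1, hμ2, hμ3, hμ4⟩ := exists_sphere_measure R hR v N hpsd htrace
  exact ⟨μ, hμ1, hμ2, fun a => hμ3 a, fun a b => hμ4 a b⟩
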